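/- Let 0 < π < 1 and let X_1 ∼ P_1, X_2 ∼ P_2 be random variables, and let f: ℝ → ℝ and c ∈ ℝ be arbitrary with (f(x) - c)² > 0 almost surely for x drawn from either distribution. Then E[π(f(X_1)-c)² + (1-π)/(f(X_2)-c)² + π(f(X_2)-c)² + (1-π)/(f(X_1)-c)²] ≥ 4√(π(1-π)), with equality if (f(x)-c)² = √((1-π)/π) almost surely under both P_1 and P_2. -/

import Mathlib

open MeasureTheory

lemma amgm_aux {p a : ℝ} (hp0 : 0 < p) (hp1 : p < 1) (ha : 0 < a) :
    2 * Real.sqrt (p * (1 - p)) ≤ p * a + (1 - p) / a := by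
  set s := Real.sqrt (p * (1 - p)) with hs
  have hs2 : s ^ 2 = p * (1 - p) := Real.sq_sqrt (by nlinarith)
  have key : 0 ≤ p * a ^ 2 - 2 * s * a + (1 - p) := by
    nlinarith [sq_nonneg (p * a - s)]
  rw [← sub_nonneg]
  have hrepr : p * a + (1 - p) / a - 2 * s = (p * a ^ 2 - 2 * s * a + (1 - p)) / a := by
    field_simp; ring
  rw [hrepr]
  exact div_nonneg key ha.le

lemma eq_aux {p : ℝ} (hp0 : 0 < p) (hp1 : p < 1) :
    p * Real.sqrt ((1 - p) / p) + (1 - p) / Real.sqrt ((1 - p) / p)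
      = 2 * Real.sqrt (p * (1 - p)) := by
  have h1p : 0 < 1 - p := by linarith
  have ht : 0 < Real.sqrt ((1 - p) / p) := Real.sqrt_pos.2 (by positivity)
  have ht2 : Real.sqrt ((1 - p) / p) ^ 2 = (1 - p) / p :=
    Real.sq_sqrt (by positivity)
  have key : p * Real.sqrt ((1 - p) / p) = Real.sqrt (p * (1 - p)) := by
    rw [← Real.sqrt_sq hp0.le, ← Real.sqrt_mul (sq_nonneg p)]
    congr 1
    field_simp
    rw [Real.sqrt_sq hp0.le]
  have key2 : (1 - p) / Real.sqrt ((1 - p) / p) = Real.sqrt (p * (1 - p)) := by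
    rw [div_eq_iff ht.ne', ← key]
    have : p * Real.sqrt ((1 - p) / p) * Real.sqrt ((1 - p) / p)
        = p * ((1 - p) / p) := by
      rw [mul_assoc, ← sq, ht2]
    rw [this]
    field_simp
  rw [key, key2]; ring

/-- Without batch normalization, the symmetric meta outlier exposure loss for Deep SVDD
with two training distributions has the distribution-independent lower bound 4√(p(1-p)),
with equality when (f(x)-c)² = √((1-p)/p) almost surely under both distributions. -/
theorem stmt6 {Ω : Type*} [MeasurableSpace Ω] (μ : Measure Ω) [IsProbabilityMeasure μ]
    (p : ℝ) (hp0 : 0 < p) (hp1 : p < 1)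
    (X₁ X₂ : Ω → ℝ) (f : ℝ → ℝ) (c : ℝ)
    (h1 : ∀ᵐ ω ∂μ, 0 < (f (X₁ ω) - c) ^ 2)
    (h2 : ∀ᵐ ω ∂μ, 0 < (f (X₂ ω) - c) ^ 2)
    (hint : Integrable (fun ω =>
      p * (f (X₁ ω) - c) ^ 2 + (1 - p) / (f (X₂ ω) - c) ^ 2
        + p * (f (X₂ ω) - c) ^ 2 + (1 - p) / (f (X₁ ω) - c) ^ 2) μ) :
    4 * Real.sqrt (p * (1 - p)) ≤
      ∫ ω, (p * (f (X₁ ω) - c) ^ 2 + (1 - p) / (f (X₂ ω) - c) ^ 2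
        + p * (f (X₂ ω) - c) ^ 2 + (1 - p) / (f (X₁ ω) - c) ^ 2) ∂μ ∧
    ((∀ᵐ ω ∂μ, (f (X₁ ω) - c) ^ 2 = Real.sqrt ((1 - p) / p)) →
     (∀ᵐ ω ∂μ, (f (X₂ ω) - c) ^ 2 = Real.sqrt ((1 - p) / p)) →
      ∫ ω, (p * (f (X₁ ω) - c) ^ 2 + (1 - p) / (f (X₂ ω) - c) ^ 2
        + p * (f (X₂ ω) - c) ^ 2 + (1 - p) / (f (X₁ ω) - c) ^ 2) ∂μ
        = 4 * Real.sqrt (p * (1 - p))) := by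
  constructor
  · have hmono : ∀ᵐ ω ∂μ, (fun _ : Ω => 4 * Real.sqrt (p * (1 - p))) ω ≤
        (fun ω => p * (f (X₁ ω) - c) ^ 2 + (1 - p) / (f (X₂ ω) - c) ^ 2
          + p * (f (X₂ ω) - c) ^ 2 + (1 - p) / (f (X₁ ω) - c) ^ 2) ω := by
      filter_upwards [h1, h2] with ω hω1 hω2
      have A := amgm_aux hp0 hp1 hω1
      have B := amgm_aux hp0 hp1 hω2
      linarith
    calc 4 * Real.sqrt (p * (1 - p))
        = ∫ _, 4 * Real.sqrt (p * (1 - p)) ∂μ := by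
          rw [integral_const]; simp
      _ ≤ _ := integral_mono_ae (integrable_const _) hint hmono
  · intro hA hB
    have hcong : ∫ ω, (p * (f (X₁ ω) - c) ^ 2 + (1 - p) / (f (X₂ ω) - c) ^ 2
        + p * (f (X₂ ω) - c) ^ 2 + (1 - p) / (f (X₁ ω) - c) ^ 2) ∂μ
        = ∫ _, 4 * Real.sqrt (p * (1 - p)) ∂μ := by
      apply integral_congr_ae
      filter_upwards [hA, hB] with ω hω1 hω2
      rw [hω1, hω2]
      have := eq_aux hp0 hp1
      linarith
    rw [hcong, integral_const]; simp
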